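/- Let p be a Markov kernel on (X, 𝒳), let x* ∈ X with the singleton {x*} measurable, and suppose there exist n ∈ ℕ and ε > 0 such that the n-step kernel satisfies p^{(n)}(x, {x*}) ≥ ε for all x ∈ X. Then any two probability measures invariant under p coincide; i.e., the invariant probability measure, if it exists, is unique. -/

import Mathlib

open MeasureTheory ProbabilityTheory

/-- The `n`-step transition kernel: `stepN p 0 = id`, `stepN p (n+1) (x, E) = ∫ p(x,dy) stepN p n (y, E)`. -/
noncomputable def stepN {X : Type*} [MeasurableSpace X] (p : Kernel X X) : ℕ → Kernel X X
  | 0 => Kernel.id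
  | n + 1 => (stepN p n).comp p

lemma stepN_markov {X : Type*} [MeasurableSpace X] (p : Kernel X X) [IsMarkovKernel p] :
    ∀ n, IsMarkovKernel (stepN p n)
  | 0 => by rw [stepN]; infer_instance
  | n + 1 => by
      rw [stepN]
      have := stepN_markov p n
      infer_instance

lemma stepN_invariant {X : Type*} [MeasurableSpace X] (p : Kernel X X)
    (μ : Measure X)
    (hinv : ∀ E : Set X, MeasurableSet E → μ E = ∫⁻ x, p x E ∂μ) :
    ∀ (n : ℕ) (E : Set X), MeasurableSet E → μ E = ∫⁻ x, stepN p n x E ∂μ := by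
  have hbind : μ.bind p = μ := by
    ext E hE
    rw [Measure.bind_apply hE p.measurable.aemeasurable, ← hinv E hE]
  intro n
  induction n with
  | zero =>
      intro E hE
      simp only [stepN, Kernel.id_apply]
      rw [lintegral_congr (fun x => Measure.dirac_apply' x hE), lintegral_indicator_one hE]
  | succ k ih =>
      intro E hE
      have hmeas : Measurable fun y => stepN p k y E := (stepN p k).measurable_coe hE
      calc μ E = ∫⁻ y, stepN p k y E ∂μ := ih E hE
        _ = ∫⁻ y, stepN p k y E ∂(μ.bind p) := by rw [hbind]
        _ = ∫⁻ x, ∫⁻ y, stepN p k y E ∂(p x) ∂μ :=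
            Measure.lintegral_bind p.measurable.aemeasurable hmeas.aemeasurable
        _ = ∫⁻ x, stepN p (k + 1) x E ∂μ := by
            refine lintegral_congr fun x => ?_
            rw [stepN, Kernel.comp_apply' _ _ _ hE]

/-- Key contraction step: if `g` is bounded below by `ε > 0` and above by `1`, `S` is a Hahn
set for `(ν₁, ν₂)`, and `νᵢ S = ∫ g dνᵢ`, then `ν₁ S = ν₂ S`. -/
lemma key_aux {X : Type*} [MeasurableSpace X] (ν₁ ν₂ : Measure X)
    [IsProbabilityMeasure ν₁] [IsProbabilityMeasure ν₂]
    (S : Set X) (hS : MeasurableSet S)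
    (h1 : ∀ t : Set X, MeasurableSet t → t ⊆ S → ν₂ t ≤ ν₁ t)
    (h2 : ∀ t : Set X, MeasurableSet t → t ⊆ Sᶜ → ν₁ t ≤ ν₂ t)
    (g : X → ENNReal) (ε : ENNReal) (hε : 0 < ε)
    (hgl : ∀ x, ε ≤ g x) (hgu : ∀ x, g x ≤ 1)
    (hi1 : ν₁ S = ∫⁻ x, g x ∂ν₁) (hi2 : ν₂ S = ∫⁻ x, g x ∂ν₂) :
    ν₁ S = ν₂ S := by
  have h12 : ν₂.restrict S ≤ ν₁.restrict S := by
    refine Measure.le_iff.2 fun t ht => ?_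
    rw [Measure.restrict_apply ht, Measure.restrict_apply ht]
    exact h1 _ (ht.inter hS) Set.inter_subset_right
  have h21 : ν₁.restrict Sᶜ ≤ ν₂.restrict Sᶜ := by
    refine Measure.le_iff.2 fun t ht => ?_
    rw [Measure.restrict_apply ht, Measure.restrict_apply ht]
    exact h2 _ (ht.inter hS.compl) Set.inter_subset_right
  set ρ : Measure X := ν₁.restrict S - ν₂.restrict S with hρ_def
  set σ : Measure X := ν₂.restrict Sᶜ - ν₁.restrict Sᶜ with hσ_def
  have hρ : ρ + ν₂.restrict S = ν₁.restrict S := Measure.sub_add_cancel_of_le h12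
  have hσ : σ + ν₁.restrict Sᶜ = ν₂.restrict Sᶜ := Measure.sub_add_cancel_of_le h21
  have hsplit1 : ∫⁻ x, g x ∂ν₁ = ∫⁻ x, g x ∂(ν₁.restrict S) + ∫⁻ x, g x ∂(ν₁.restrict Sᶜ) := by
    rw [← lintegral_add_measure, Measure.restrict_add_restrict_compl hS]
  have hsplit2 : ∫⁻ x, g x ∂ν₂ = ∫⁻ x, g x ∂(ν₂.restrict S) + ∫⁻ x, g x ∂(ν₂.restrict Sᶜ) := by
    rw [← lintegral_add_measure, Measure.restrict_add_restrict_compl hS]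
  have l1 : ∫⁻ x, g x ∂(ν₁.restrict S) = ∫⁻ x, g x ∂ρ + ∫⁻ x, g x ∂(ν₂.restrict S) := by
    rw [← lintegral_add_measure, hρ]
  have l2 : ∫⁻ x, g x ∂(ν₂.restrict Sᶜ) = ∫⁻ x, g x ∂σ + ∫⁻ x, g x ∂(ν₁.restrict Sᶜ) := by
    rw [← lintegral_add_measure, hσ]
  have key : ν₁ S + ∫⁻ x, g x ∂σ = ν₂ S + ∫⁻ x, g x ∂ρ := by
    rw [hi1, hi2, hsplit1, hsplit2, l1, l2]; ring
  have hba : ν₂ S ≤ ν₁ S := h1 S hS subset_rfl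
  have hbρ : ∫⁻ x, g x ∂ρ ≤ ρ Set.univ := by
    calc ∫⁻ x, g x ∂ρ ≤ ∫⁻ _, 1 ∂ρ := lintegral_mono hgu
      _ = ρ Set.univ := lintegral_one
  have hρu : ρ Set.univ = ν₁ S - ν₂ S := by
    rw [hρ_def, Measure.sub_apply MeasurableSet.univ h12, Measure.restrict_apply_univ,
      Measure.restrict_apply_univ]
  have hbσ : ε * σ Set.univ ≤ ∫⁻ x, g x ∂σ := by
    calc ε * σ Set.univ = ∫⁻ _, ε ∂σ := (lintegral_const ε).symm
      _ ≤ ∫⁻ x, g x ∂σ := lintegral_mono hgl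
  have chain : ν₁ S + ε * σ Set.univ ≤ ν₁ S + 0 := by
    calc ν₁ S + ε * σ Set.univ ≤ ν₁ S + ∫⁻ x, g x ∂σ := add_le_add_right hbσ _
      _ = ν₂ S + ∫⁻ x, g x ∂ρ := key
      _ ≤ ν₂ S + ρ Set.univ := add_le_add_right hbρ _
      _ = ν₂ S + (ν₁ S - ν₂ S) := by rw [hρu]
      _ = ν₁ S := by rw [add_comm, tsub_add_cancel_of_le hba]
      _ = ν₁ S + 0 := (add_zero _).symm
  have hσ0 : ε * σ Set.univ ≤ 0 :=
    (WithTop.add_le_add_iff_left (measure_ne_top ν₁ S)).1 chain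
  have hσz : σ = 0 := by
    rw [← Measure.measure_univ_eq_zero]
    rcases mul_eq_zero.1 (le_antisymm hσ0 zero_le) with h | h
    · exact absurd h hε.ne'
    · exact h
  have hcompl : ν₁ Sᶜ = ν₂ Sᶜ := by
    have := congrArg (fun m : Measure X => m Set.univ) hσ
    simp only [hσz, zero_add, Measure.restrict_apply_univ] at this
    exact this
  have h1c : ν₁ S + ν₁ Sᶜ = 1 := prob_add_prob_compl hS
  have h2c : ν₂ S + ν₂ Sᶜ = 1 := prob_add_prob_compl hS
  refine (ENNReal.add_left_inj (measure_ne_top ν₁ Sᶜ)).1 ?_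
  rw [h1c, hcompl, h2c]

/-- If the `n`-step kernel satisfies `p^{(n)}(x, {x*}) ≥ ε > 0` for all `x`, then any two
invariant probability measures coincide. -/
theorem invariant_measure_unique_of_minorization
    {X : Type*} [MeasurableSpace X] [MeasurableSingletonClass X]
    (p : Kernel X X) [IsMarkovKernel p]
    (xstar : X) (n : ℕ) (ε : ENNReal) (hε : 0 < ε)
    (hmin : ∀ x : X, ε ≤ stepN p n x {xstar})
    (μ₁ μ₂ : Measure X) [IsProbabilityMeasure μ₁] [IsProbabilityMeasure μ₂]
    (hinv₁ : ∀ E : Set X, MeasurableSet E → μ₁ E = ∫⁻ x, p x E ∂μ₁)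
    (hinv₂ : ∀ E : Set X, MeasurableSet E → μ₂ E = ∫⁻ x, p x E ∂μ₂) :
    μ₁ = μ₂ := by
  have hM : IsMarkovKernel (stepN p n) := stepN_markov p n
  have hprob : ∀ x, IsProbabilityMeasure (stepN p n x) := fun x => hM.isProbabilityMeasure x
  obtain ⟨S, hS, hS1, hS2⟩ := hahn_decomposition (μ := μ₁) (ν := μ₂)
  -- show μ₁ S = μ₂ S using the minorization
  have hSS : μ₁ S = μ₂ S := by
    by_cases hx : xstar ∈ S
    · refine key_aux μ₁ μ₂ S hS hS1 hS2 (fun x => stepN p n x S) ε hε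
        (fun x => (hmin x).trans (measure_mono (Set.singleton_subset_iff.2 hx)))
        (fun x => haveI := hprob x; prob_le_one)
        (stepN_invariant p μ₁ hinv₁ n S hS) (stepN_invariant p μ₂ hinv₂ n S hS)
    · have hxc : xstar ∈ Sᶜ := hx
      have h := key_aux μ₂ μ₁ Sᶜ hS.compl hS2
        (fun t ht hts => hS1 t ht (by rwa [compl_compl] at hts))
        (fun x => stepN p n x Sᶜ) ε hε
        (fun x => (hmin x).trans (measure_mono (Set.singleton_subset_iff.2 hxc)))
        (fun x => haveI := hprob x; prob_le_one)
        (stepN_invariant p μ₂ hinv₂ n Sᶜ hS.compl) (stepN_invariant p μ₁ hinv₁ n Sᶜ hS.compl)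
      -- h : μ₂ Sᶜ = μ₁ Sᶜ
      have h1c : μ₁ S + μ₁ Sᶜ = 1 := prob_add_prob_compl hS
      have h2c : μ₂ S + μ₂ Sᶜ = 1 := prob_add_prob_compl hS
      refine (ENNReal.add_left_inj (measure_ne_top μ₁ Sᶜ)).1 ?_
      rw [h1c, h] at *
      rw [h2c]
  -- conclude μ₁ ≤ μ₂ setwise
  have hmono : ∀ E : Set X, MeasurableSet E → μ₁ E ≤ μ₂ E := by
    intro E hE
    have hin : μ₁ (S ∩ E) ≤ μ₂ (S ∩ E) := by
      have e1 : μ₁ (S ∩ E) + μ₁ (S \ E) = μ₁ S := measure_inter_add_diff S hE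
      have e2 : μ₂ (S ∩ E) + μ₂ (S \ E) = μ₂ S := measure_inter_add_diff S hE
      have hdiff : μ₂ (S \ E) ≤ μ₁ (S \ E) :=
        hS1 _ (hS.diff hE) Set.diff_subset
      have : μ₁ (S ∩ E) + μ₂ (S \ E) ≤ μ₂ (S ∩ E) + μ₂ (S \ E) := by
        calc μ₁ (S ∩ E) + μ₂ (S \ E) ≤ μ₁ (S ∩ E) + μ₁ (S \ E) := add_le_add_right hdiff _
          _ = μ₁ S := e1
          _ = μ₂ S := hSS
          _ = μ₂ (S ∩ E) + μ₂ (S \ E) := e2.symm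
      exact (WithTop.add_le_add_iff_right (measure_ne_top μ₂ (S \ E))).1 this
    have hout : μ₁ (E \ S) ≤ μ₂ (E \ S) :=
      hS2 _ (hE.diff hS) (fun x hx => hx.2)
    calc μ₁ E = μ₁ (E ∩ S) + μ₁ (E \ S) := (measure_inter_add_diff E hS).symm
      _ = μ₁ (S ∩ E) + μ₁ (E \ S) := by rw [Set.inter_comm]
      _ ≤ μ₂ (S ∩ E) + μ₂ (E \ S) := add_le_add hin hout
      _ = μ₂ (E ∩ S) + μ₂ (E \ S) := by rw [Set.inter_comm]
      _ = μ₂ E := measure_inter_add_diff E hS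
  ext E hE
  refine le_antisymm (hmono E hE) ?_
  have hc := hmono Eᶜ hE.compl
  have h1c : μ₁ E + μ₁ Eᶜ = 1 := prob_add_prob_compl hE
  have h2c : μ₂ E + μ₂ Eᶜ = 1 := prob_add_prob_compl hE
  have : μ₂ E + μ₂ Eᶜ ≤ μ₁ E + μ₂ Eᶜ := by
    calc μ₂ E + μ₂ Eᶜ = 1 := h2c
      _ = μ₁ E + μ₁ Eᶜ := h1c.symm
      _ ≤ μ₁ E + μ₂ Eᶜ := add_le_add_right hc _
  exact (WithTop.add_le_add_iff_right (measure_ne_top μ₂ Eᶜ)).1 this
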